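/- Let s, n, a, b be positive natural numbers and let p be a prime such that s(n − 1) = p^a − 1 and p^b divides n, where b = a or a = 2b. Then n = p^a or n = p^b. -/
import Mathlib
set_option maxHeartbeats 1000000


/-- If `s(n-1) = p^a - 1` and `p^b ∣ n` where `b = a` or `a = 2b`
(all variables positive, `p` prime), then `n = p^a` or `n = p^b`. -/
theorem eq_pow_of_arith (s n a b : ℕ) (hs : 0 < s) (hn : 0 < n) (ha : 0 < a)
    (hb : 0 < b) (p : ℕ) (hp : p.Prime)
    (h1 : s * (n - 1) = p ^ a - 1) (h2 : p ^ b ∣ n) (h3 : b = a ∨ a = 2 * b) :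
    n = p ^ a ∨ n = p ^ b := by
  have hp2 : 2 ≤ p := hp.two_le
  have hq2 : 2 ≤ p ^ b := le_trans hp2 (Nat.le_self_pow hb.ne' p)
  have hnq : p ^ b ≤ n := Nat.le_of_dvd hn h2
  have hpa1 : 1 ≤ p ^ a := Nat.one_le_pow _ _ (by omega)
  have hn2 : 2 ≤ n := le_trans hq2 hnq
  have hle : n - 1 ≤ s * (n - 1) := Nat.le_mul_of_pos_left _ hs
  have hnpa : n ≤ p ^ a := by omega
  rcases h3 with hba | hab
  · left; subst hba; omega
  · -- a = 2b case
    obtain ⟨k, hk⟩ := h2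
    have hk1 : 1 ≤ k := Nat.pos_of_ne_zero (by rintro rfl; omega)
    have hcast : (s : ℤ) * ((n : ℤ) - 1) = ((p : ℤ) ^ b) ^ 2 - 1 := by
      have h' : (s : ℤ) * ((n : ℤ) - 1) = ((p : ℤ)) ^ a - 1 := by
        have := congrArg (Nat.cast : ℕ → ℤ) h1
        rw [Nat.cast_mul, Nat.cast_sub (by omega : 1 ≤ n), Nat.cast_sub hpa1,
          Nat.cast_pow, Nat.cast_one] at this
        exact this
      rw [h', hab, pow_mul']
    have hq2' : (2 : ℤ) ≤ (p : ℤ) ^ b := by exact_mod_cast hq2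
    have hnk : (n : ℤ) = (p : ℤ) ^ b * (k : ℤ) := by exact_mod_cast hk
    have hnq' : (p : ℤ) ^ b ≤ (n : ℤ) := by exact_mod_cast hnq
    have hs1 : (1 : ℤ) ≤ (s : ℤ) := by exact_mod_cast hs
    have h' : (s : ℤ) * ((p : ℤ) ^ b * (k : ℤ) - 1) = ((p : ℤ) ^ b) ^ 2 - 1 := by
      rw [← hnk]; exact hcast
    have hdvd : (p : ℤ) ^ b ∣ (s : ℤ) - 1 :=
      ⟨(s : ℤ) * (k : ℤ) - (p : ℤ) ^ b, by linear_combination -h'⟩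
    have hsle : (s : ℤ) ≤ (p : ℤ) ^ b + 1 := by
      nlinarith [hcast, hnq', hs1, hq2']
    obtain ⟨c, hc⟩ := hdvd
    have hc0 : 0 ≤ c := by nlinarith
    have hc1 : c ≤ 1 := by nlinarith
    have hcc : c = 0 ∨ c = 1 := by omega
    rcases hcc with rfl | rfl
    · -- s = 1
      left
      have hs1' : (s : ℤ) = 1 := by linarith
      rw [hs1', one_mul] at hcast
      have hfin : (n : ℤ) = ((p : ℤ)) ^ a := by
        rw [hab, pow_mul']; linarith
      exact_mod_cast hfin
    · -- s = q + 1
      right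
      have hs' : (s : ℤ) = (p : ℤ) ^ b + 1 := by linarith
      have hq1 : (p : ℤ) ^ b + 1 ≠ 0 := by linarith
      have heq : (n : ℤ) - 1 = (p : ℤ) ^ b - 1 := by
        have h'' : ((p : ℤ) ^ b + 1) * ((n : ℤ) - 1) =
            ((p : ℤ) ^ b + 1) * ((p : ℤ) ^ b - 1) := by
          linear_combination hcast - ((n : ℤ) - 1) * hs'
        exact mul_left_cancel₀ hq1 h''
      have hfin : (n : ℤ) = (p : ℤ) ^ b := by linarith
      exact_mod_cast hfin
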